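/- Let A be an n-element set of real numbers and G a graph on vertex set A with m edges. Then |A +_G A| + |A ·_G A| = Ω(m^{3/2} / n^{7/4}); precisely, there is an absolute constant c > 0 such that |A +_G A| + |A ·_G A| ≥ c · m^{3/2} / n^{7/4}. -/

import Mathlib

open Finset

noncomputable section
open scoped Classical

/-- points of `Pts` on the line `y = ℓ.1 * x + ℓ.2`. -/
def ptsOn (Pts : Finset (ℝ × ℝ)) (ℓ : ℝ × ℝ) : Finset (ℝ × ℝ) :=
  Pts.filter fun p => p.2 = ℓ.1 * p.1 + ℓ.2

/-- number of incidences -/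
def inc (Pts L : Finset (ℝ × ℝ)) : ℕ := ∑ ℓ ∈ L, (ptsOn Pts ℓ).card

lemma two_pts {ℓ ℓ' p q : ℝ × ℝ} (hp : p.2 = ℓ.1 * p.1 + ℓ.2) (hq : q.2 = ℓ.1 * q.1 + ℓ.2)
    (hp' : p.2 = ℓ'.1 * p.1 + ℓ'.2) (hq' : q.2 = ℓ'.1 * q.1 + ℓ'.2) (hpq : p ≠ q) :
    ℓ = ℓ' := by
  rcases eq_or_ne p.1 q.1 with h | h
  · exact absurd (Prod.ext h (by rw [hp, hq, h])) hpq
  · have key : (ℓ.1 - ℓ'.1) * (p.1 - q.1) = 0 := by linarith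
    have h1 : ℓ.1 = ℓ'.1 := by
      rcases mul_eq_zero.mp key with h' | h'
      · linarith
      · exact absurd (by linarith) h
    have h2 : ℓ.2 = ℓ'.2 := by
      have := hp'.symm.trans hp
      rw [h1] at this; linarith
    exact Prod.ext h1 h2

lemma sum_pairs_le (Pts L : Finset (ℝ × ℝ)) :
    ∑ ℓ ∈ L, ((ptsOn Pts ℓ).offDiag).card ≤ Pts.card * Pts.card := by
  rw [← Finset.card_sigma]
  calc (L.sigma fun ℓ => (ptsOn Pts ℓ).offDiag).card
      ≤ (Pts ×ˢ Pts).card := by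
        apply Finset.card_le_card_of_injOn (fun z => z.2)
        · rintro ⟨ℓ, p, q⟩ hz
          simp only [Finset.mem_coe, Finset.mem_sigma, Finset.mem_offDiag, ptsOn, Finset.mem_filter] at hz
          simp [Finset.mem_product, hz.2.1.1, hz.2.2.1.1]
        · rintro ⟨ℓ, p, q⟩ hz ⟨ℓ', p', q'⟩ hz' hE
          simp only [Finset.mem_coe, Finset.mem_sigma, Finset.mem_offDiag, ptsOn,
            Finset.mem_filter] at hz hz'
          simp only [Prod.mk.injEq] at hE
          obtain ⟨rfl, rfl⟩ : p = p' ∧ q = q' := ⟨hE.1, hE.2⟩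
          have : ℓ = ℓ' := two_pts hz.2.1.2 hz.2.2.1.2 hz'.2.1.2 hz'.2.2.1.2 hz.2.2.2
          subst this; rfl
    _ = Pts.card * Pts.card := by rw [Finset.card_product]

/-- Cauchy–Schwarz incidence bound: `I ≤ L + √L · P`. -/
lemma inc_le (Pts L : Finset (ℝ × ℝ)) :
    (inc Pts L : ℝ) ≤ L.card + Real.sqrt L.card * Pts.card := by
  set I : ℝ := (inc Pts L : ℝ) with hI
  have hI0 : 0 ≤ I := by positivity
  set P : ℝ := (Pts.card : ℝ) with hP
  set N : ℝ := (L.card : ℝ) with hN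
  have hP0 : 0 ≤ P := by positivity
  have hN0 : 0 ≤ N := by positivity
  have hIsum : I = ∑ ℓ ∈ L, ((ptsOn Pts ℓ).card : ℝ) := by
    rw [hI]; unfold inc; push_cast; rfl
  have hoff : ∀ ℓ : ℝ × ℝ, (((ptsOn Pts ℓ).card : ℝ)) ^ 2
      = ((ptsOn Pts ℓ).offDiag.card : ℝ) + ((ptsOn Pts ℓ).card : ℝ) := by
    intro ℓ
    have h1 : (ptsOn Pts ℓ).offDiag.card = (ptsOn Pts ℓ).card * (ptsOn Pts ℓ).card
        - (ptsOn Pts ℓ).card := Finset.offDiag_card _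
    have h2 : (ptsOn Pts ℓ).card ≤ (ptsOn Pts ℓ).card * (ptsOn Pts ℓ).card := by
      rcases Nat.eq_zero_or_pos (ptsOn Pts ℓ).card with h | h
      · simp [h]
      · exact Nat.le_mul_of_pos_left _ h
    have h3 : (ptsOn Pts ℓ).offDiag.card + (ptsOn Pts ℓ).card
        = (ptsOn Pts ℓ).card * (ptsOn Pts ℓ).card := by omega
    have := congrArg (Nat.cast (R := ℝ)) h3
    push_cast at this
    nlinarith [this]
  have key : I ^ 2 ≤ N * (I + P ^ 2) := by
    have hcs := Finset.sum_mul_sq_le_sq_mul_sq L (fun _ => (1:ℝ))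
      (fun ℓ => ((ptsOn Pts ℓ).card : ℝ))
    simp only [one_mul, one_pow] at hcs
    have hpair : ((∑ ℓ ∈ L, ((ptsOn Pts ℓ).offDiag).card : ℕ) : ℝ) ≤ P ^ 2 := by
      have := sum_pairs_le Pts L
      calc ((∑ ℓ ∈ L, ((ptsOn Pts ℓ).offDiag).card : ℕ) : ℝ)
          ≤ ((Pts.card * Pts.card : ℕ) : ℝ) := by exact_mod_cast this
        _ = P ^ 2 := by push_cast; ring
    have hsum : ∑ ℓ ∈ L, (((ptsOn Pts ℓ).card : ℝ)) ^ 2 ≤ I + P ^ 2 := by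
      rw [Finset.sum_congr rfl (fun ℓ _ => hoff ℓ), Finset.sum_add_distrib, ← hIsum]
      push_cast at hpair
      linarith
    calc I ^ 2 = (∑ ℓ ∈ L, (((ptsOn Pts ℓ).card : ℝ))) ^ 2 := by rw [hIsum]
      _ ≤ (∑ _ℓ ∈ L, (1:ℝ)) * ∑ ℓ ∈ L, (((ptsOn Pts ℓ).card : ℝ)) ^ 2 := hcs
      _ = N * ∑ ℓ ∈ L, (((ptsOn Pts ℓ).card : ℝ)) ^ 2 := by simp [hN]
      _ ≤ N * (I + P ^ 2) := mul_le_mul_of_nonneg_left hsum hN0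
  have hs0 : 0 ≤ Real.sqrt N := Real.sqrt_nonneg _
  have hs2 : Real.sqrt N ^ 2 = N := Real.sq_sqrt hN0
  by_contra hcon
  push_neg at hcon
  nlinarith [mul_nonneg hs0 hP0, mul_nonneg (mul_nonneg hs0 hP0) hI0,
    sq_nonneg (I - N), mul_nonneg hN0 hP0]


/-- block index of `v` w.r.t. `X` with block size `s` -/
def blk (X : Finset ℝ) (s : ℕ) (v : ℝ) : ℕ := (X.filter fun x => x < v).card / s

lemma blk_mono (X : Finset ℝ) (s : ℕ) {v w : ℝ} (h : v ≤ w) : blk X s v ≤ blk X s w := by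
  apply Nat.div_le_div_right
  apply Finset.card_le_card
  intro x hx
  rw [Finset.mem_filter] at hx ⊢
  exact ⟨hx.1, lt_of_lt_of_le hx.2 h⟩

lemma blk_rev (X : Finset ℝ) (s : ℕ) {v w : ℝ} (h : blk X s v < blk X s w) : v < w := by
  by_contra hc
  push_neg at hc
  exact absurd (blk_mono X s hc) (by omega)

lemma rank_lt {X : Finset ℝ} {x : ℝ} (hx : x ∈ X) : (X.filter fun y => y < x).card < X.card :=
  Finset.card_lt_card ⟨Finset.filter_subset _ _, fun hsub =>
    absurd (Finset.mem_filter.mp (hsub hx)).2 (lt_irrefl x)⟩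

lemma blk_lt {X : Finset ℝ} {s r : ℕ} (hs : 0 < s) (hX : X.card ≤ s * r) {x : ℝ}
    (hx : x ∈ X) : blk X s x < r := by
  have h := rank_lt hx
  unfold blk
  rw [Nat.div_lt_iff_lt_mul hs]
  calc (X.filter fun y => y < x).card < X.card := h
    _ ≤ s * r := hX
    _ = r * s := Nat.mul_comm _ _

lemma rank_strictMono {X : Finset ℝ} {x y : ℝ} (hx : x ∈ X) (h : x < y) :
    (X.filter fun z => z < x).card < (X.filter fun z => z < y).card := by
  apply Finset.card_lt_card
  constructor
  · intro z hz
    rw [Finset.mem_filter] at hz ⊢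
    exact ⟨hz.1, lt_trans hz.2 h⟩
  · intro hsub
    have := Finset.mem_filter.mp (hsub (Finset.mem_filter.mpr ⟨hx, h⟩))
    exact absurd this.2 (lt_irrefl x)

lemma blk_card (X : Finset ℝ) (s : ℕ) (hs : 0 < s) (i : ℕ) :
    (X.filter fun x => blk X s x = i).card ≤ s := by
  have : (X.filter fun x => blk X s x = i).card ≤ (Finset.Ico (i*s) (i*s+s)).card := by
    apply Finset.card_le_card_of_injOn (fun x => (X.filter fun y => y < x).card)
    · intro x hx
      rw [Finset.mem_coe, Finset.mem_filter] at hx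
      have h1 := hx.2
      unfold blk at h1
      have h2 := Nat.div_add_mod (X.filter fun y => y < x).card s
      rw [h1] at h2
      have h3 := Nat.mod_lt (X.filter fun y => y < x).card hs
      have hcomm : s * i = i * s := Nat.mul_comm s i
      simp only [Finset.mem_coe, Finset.mem_Ico]
      omega
    · intro x hx y hy hxy
      rw [Finset.mem_coe, Finset.mem_filter] at hx hy
      rcases lt_trichotomy x y with h | h | h
      · exact absurd hxy (Nat.ne_of_lt (rank_strictMono hx.1 h))
      · exact h
      · exact absurd hxy.symm (Nat.ne_of_lt (rank_strictMono hy.1 h))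
  simpa using this

section grid
variable (X Y : Finset ℝ) (L : Finset (ℝ × ℝ)) (r s t : ℕ)

/-- points of the grid in cell `c` -/
def ptsC (c : ℕ × ℕ) : Finset (ℝ × ℝ) :=
  (X ×ˢ Y).filter fun p => blk X s p.1 = c.1 ∧ blk Y t p.2 = c.2

/-- visited cells of a line -/
def vis (ℓ : ℝ × ℝ) : Finset (ℕ × ℕ) :=
  (Finset.range r ×ˢ Finset.range r).filter fun c => (ptsOn (ptsC X Y s t c) ℓ).Nonempty

lemma vis_staircase {ℓ : ℝ × ℝ} {c c' : ℕ × ℕ} (hc : c ∈ vis X Y r s t ℓ)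
    (hc' : c' ∈ vis X Y r s t ℓ) (h : c.1 < c'.1) :
    (0 ≤ ℓ.1 → c.2 ≤ c'.2) ∧ (ℓ.1 ≤ 0 → c'.2 ≤ c.2) := by
  rw [vis, Finset.mem_filter] at hc hc'
  obtain ⟨p, hp⟩ := hc.2
  obtain ⟨p', hp'⟩ := hc'.2
  rw [ptsOn, ptsC, Finset.mem_filter, Finset.mem_filter] at hp hp'
  obtain ⟨⟨_, hbp⟩, hlp⟩ := hp
  obtain ⟨⟨_, hbp'⟩, hlp'⟩ := hp'
  have hxx : p.1 < p'.1 := blk_rev X s (by rw [hbp.1, hbp'.1]; exact h)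
  constructor
  · intro hq
    have hyy : p.2 ≤ p'.2 := by rw [hlp, hlp']; nlinarith
    rw [← hbp.2, ← hbp'.2]
    exact blk_mono Y t hyy
  · intro hq
    have hyy : p'.2 ≤ p.2 := by rw [hlp, hlp']; nlinarith
    rw [← hbp.2, ← hbp'.2]
    exact blk_mono Y t hyy

lemma vis_card (hr : 0 < r) (ℓ : ℝ × ℝ) : (vis X Y r s t ℓ).card ≤ 2 * r := by
  rcases le_or_gt 0 ℓ.1 with hq | hq
  · have : (vis X Y r s t ℓ).card ≤ (Finset.range (2*r)).card := by
      apply Finset.card_le_card_of_injOn (fun c => c.1 + c.2)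
      · intro c hcv
        have hc := (Finset.mem_filter.mp hcv).1
        rw [Finset.mem_product, Finset.mem_range, Finset.mem_range] at hc
        simp only [Finset.mem_coe, Finset.mem_range]; omega
      · intro c hc c' hc' hE
        rw [Finset.mem_coe] at hc hc'
        simp only at hE
        rcases lt_trichotomy c.1 c'.1 with h | h | h
        · have := (vis_staircase X Y r s t hc hc' h).1 hq; omega
        · have : c.2 = c'.2 := by omega
          exact Prod.ext h this
        · have := (vis_staircase X Y r s t hc' hc h).1 hq; omega
    simpa using this
  · have : (vis X Y r s t ℓ).card ≤ (Finset.range (2*r)).card := by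
      apply Finset.card_le_card_of_injOn (fun c => c.1 + (r - c.2))
      · intro c hcv
        have hc := (Finset.mem_filter.mp hcv).1
        rw [Finset.mem_product, Finset.mem_range, Finset.mem_range] at hc
        simp only [Finset.mem_coe, Finset.mem_range]; omega
      · intro c hc c' hc' hE
        rw [Finset.mem_coe] at hc hc'
        have hcr := (Finset.mem_filter.mp hc).1
        have hcr' := (Finset.mem_filter.mp hc').1
        rw [Finset.mem_product, Finset.mem_range, Finset.mem_range] at hcr hcr'
        simp only at hE
        rcases lt_trichotomy c.1 c'.1 with h | h | h
        · have := (vis_staircase X Y r s t hc hc' h).2 (le_of_lt hq); omega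
        · have : c.2 = c'.2 := by omega
          exact Prod.ext h this
        · have := (vis_staircase X Y r s t hc' hc h).2 (le_of_lt hq); omega
    simpa using this
end grid

/-- The elementary Szemerédi–Trotter bound for Cartesian products. -/
theorem incidence_bound (X Y : Finset ℝ) (L : Finset (ℝ × ℝ)) (r s t : ℕ)
    (hr : 0 < r) (hs : 0 < s) (ht : 0 < t) (hX : X.card ≤ s * r) (hY : Y.card ≤ t * r) :
    (inc (X ×ˢ Y) L : ℝ) ≤ 2*r*L.card + s*t*r*Real.sqrt (2*r*L.card) := by
  classical
  set cells : Finset (ℕ × ℕ) := Finset.range r ×ˢ Finset.range r with hcells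
  -- decompose incidences cell by cell
  have step1 : inc (X ×ˢ Y) L = ∑ c ∈ cells, inc (ptsC X Y s t c) (L.filter
      fun ℓ => (ptsOn (ptsC X Y s t c) ℓ).Nonempty) := by
    unfold inc
    have hline : ∀ ℓ ∈ L, (ptsOn (X ×ˢ Y) ℓ).card
        = ∑ c ∈ cells, (ptsOn (ptsC X Y s t c) ℓ).card := by
      intro ℓ _
      have := Finset.card_eq_sum_card_fiberwise
        (f := fun p : ℝ × ℝ => (blk X s p.1, blk Y t p.2)) (s := ptsOn (X ×ˢ Y) ℓ) (t := cells)
        (by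
          intro p hp
          simp only [ptsOn, Finset.mem_coe, Finset.mem_filter, Finset.mem_product] at hp
          simp only [hcells, Finset.mem_coe, Finset.mem_product, Finset.mem_range]
          exact ⟨blk_lt hs hX hp.1.1, blk_lt ht hY hp.1.2⟩)
      rw [this]
      apply Finset.sum_congr rfl
      intro c _
      congr 1
      ext p
      simp only [ptsOn, ptsC, Finset.mem_filter, Prod.ext_iff]
      tauto
    rw [Finset.sum_congr rfl hline, Finset.sum_comm]
    apply Finset.sum_congr rfl
    intro c _
    rw [Finset.sum_filter_of_ne]
    intro ℓ _ hne
    exact Finset.nonempty_of_ne_empty (fun h => hne (by rw [h, Finset.card_empty]))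
  -- total number of (cell, line-meeting-cell) pairs
  have step2 : ∑ c ∈ cells, ((L.filter fun ℓ => (ptsOn (ptsC X Y s t c) ℓ).Nonempty).card)
      ≤ 2 * r * L.card := by
    have hsw : ∑ c ∈ cells, ((L.filter fun ℓ => (ptsOn (ptsC X Y s t c) ℓ).Nonempty).card)
        = ∑ ℓ ∈ L, (vis X Y r s t ℓ).card := by
      simp only [Finset.card_filter, vis]
      rw [Finset.sum_comm]
    rw [hsw]
    calc ∑ ℓ ∈ L, (vis X Y r s t ℓ).card ≤ ∑ _ℓ ∈ L, 2 * r :=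
          Finset.sum_le_sum (fun ℓ _ => vis_card X Y r s t hr ℓ)
      _ = 2 * r * L.card := by rw [Finset.sum_const, smul_eq_mul]; ring
  -- now put everything together over ℝ
  rw [step1]
  push_cast
  set f : ℕ × ℕ → ℝ := fun c => ((L.filter
      fun ℓ => (ptsOn (ptsC X Y s t c) ℓ).Nonempty).card : ℝ) with hf
  have hf0 : ∀ c, 0 ≤ f c := fun c => by positivity
  have hcell : ∀ c ∈ cells, ((inc (ptsC X Y s t c) (L.filter
      fun ℓ => (ptsOn (ptsC X Y s t c) ℓ).Nonempty) : ℕ) : ℝ)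
      ≤ f c + Real.sqrt (f c) * (s * t) := by
    intro c _
    refine le_trans (inc_le _ _) ?_
    have hpc : ((ptsC X Y s t c).card : ℝ) ≤ (s : ℝ) * t := by
      have hsub : ptsC X Y s t c ⊆
          (X.filter fun x => blk X s x = c.1) ×ˢ (Y.filter fun y => blk Y t y = c.2) := by
        intro p hp
        rw [ptsC, Finset.mem_filter, Finset.mem_product] at hp
        rw [Finset.mem_product, Finset.mem_filter, Finset.mem_filter]
        exact ⟨⟨hp.1.1, hp.2.1⟩, ⟨hp.1.2, hp.2.2⟩⟩
      have := Finset.card_le_card hsub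
      rw [Finset.card_product] at this
      have h1 := blk_card X s hs c.1
      have h2 := blk_card Y t ht c.2
      have : (ptsC X Y s t c).card ≤ s * t :=
        le_trans this (Nat.mul_le_mul h1 h2)
      exact_mod_cast this
    have := mul_le_mul_of_nonneg_left hpc (Real.sqrt_nonneg (f c))
    linarith
  have hsum := Finset.sum_le_sum hcell
  rw [Finset.sum_add_distrib] at hsum
  refine le_trans hsum ?_
  have hA : ∑ c ∈ cells, f c ≤ 2*r*L.card := by
    simp only [hf]
    exact_mod_cast step2
  have hB : ∑ c ∈ cells, Real.sqrt (f c) * (s*t) ≤ (s:ℝ)*t*r*Real.sqrt (2*r*L.card) := by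
    have hcs := Finset.sum_mul_sq_le_sq_mul_sq cells (fun _ => (1:ℝ))
      (fun c => Real.sqrt (f c))
    simp only [one_mul, one_pow] at hcs
    have hsq : ∀ c ∈ cells, Real.sqrt (f c) ^ 2 = f c := fun c _ => Real.sq_sqrt (hf0 c)
    rw [Finset.sum_congr rfl hsq] at hcs
    have hcard : (∑ _c ∈ cells, (1:ℝ)) = (r : ℝ)^2 := by
      rw [Finset.sum_const, nsmul_eq_mul, mul_one, hcells, Finset.card_product,
        Finset.card_range]
      push_cast; ring
    rw [hcard] at hcs
    have h1 : (∑ c ∈ cells, Real.sqrt (f c))^2 ≤ (r:ℝ)^2 * (2*r*L.card) :=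
      le_trans hcs (by
        apply mul_le_mul_of_nonneg_left hA (by positivity))
    have h2 : ∑ c ∈ cells, Real.sqrt (f c) ≤ (r:ℝ) * Real.sqrt (2*r*L.card) := by
      have hnn : 0 ≤ ∑ c ∈ cells, Real.sqrt (f c) :=
        Finset.sum_nonneg (fun c _ => Real.sqrt_nonneg _)
      have hm := Real.sqrt_le_sqrt h1
      rw [Real.sqrt_sq hnn] at hm
      rw [Real.sqrt_mul (by positivity : (0:ℝ) ≤ (r:ℝ)^2),
        Real.sqrt_sq (by positivity : (0:ℝ) ≤ (r:ℝ))] at hm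
      exact hm
    calc ∑ c ∈ cells, Real.sqrt (f c) * (s*t) = (∑ c ∈ cells, Real.sqrt (f c)) * (s*t) := by
          rw [← Finset.sum_mul]
      _ ≤ ((r:ℝ) * Real.sqrt (2*r*L.card)) * (s*t) := by
          apply mul_le_mul_of_nonneg_right h2 (by positivity)
      _ = (s:ℝ)*t*r*Real.sqrt (2*r*L.card) := by ring
  push_cast at hA hB ⊢
  linarith


section setup
variable (n : ℕ) (G : SimpleGraph (Fin n)) [DecidableRel G.Adj] (a : Fin n → ℝ)

/-- ordered edges -/
def EF : Finset (Fin n × Fin n) := Finset.univ.filter fun p => G.Adj p.1 p.2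
/-- graph sums -/
def SS : Finset ℝ := (EF n G).image fun p => a p.1 + a p.2
/-- graph products -/
def PP : Finset ℝ := (EF n G).image fun p => a p.1 * a p.2
/-- lines -/
def LL : Finset (ℝ × ℝ) :=
  ((Finset.univ : Finset (Fin n × Fin n)).filter fun p => a p.2 ≠ 0).image
    fun p => (a p.2, -(a p.1 * a p.2))
/-- ordered paths (u, w1, w2) -/
def T0 : Finset (Fin n × Fin n × Fin n) :=
  Finset.univ.filter fun z => G.Adj z.1 z.2.1 ∧ G.Adj z.1 z.2.2
/-- good ordered paths -/
def T1 : Finset (Fin n × Fin n × Fin n) := (T0 n G).filter fun z => a z.2.2 ≠ 0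

lemma EF_card : (EF n G).card = 2 * G.edgeFinset.card := by
  rw [← SimpleGraph.sum_degrees_eq_twice_card_edges]
  rw [Finset.card_eq_sum_card_fiberwise (f := Prod.fst) (t := Finset.univ)
    (fun x _ => Finset.mem_univ _)]
  apply Finset.sum_congr rfl
  intro u _
  rw [← SimpleGraph.card_neighborFinset_eq_degree]
  apply Finset.card_bij (fun p _ => p.2)
  · intro p hp
    simp only [EF, Finset.mem_filter, Finset.mem_univ, true_and] at hp
    rw [SimpleGraph.mem_neighborFinset, ← hp.2]
    exact hp.1
  · intro p hp q hq hE
    simp only [EF, Finset.mem_filter] at hp hq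
    exact Prod.ext (hp.2.trans hq.2.symm) hE
  · intro w hw
    rw [SimpleGraph.mem_neighborFinset] at hw
    exact ⟨(u, w), by simp [EF, hw], rfl⟩

lemma T0_card : (T0 n G).card = ∑ u : Fin n, (G.degree u)^2 := by
  rw [Finset.card_eq_sum_card_fiberwise (f := Prod.fst) (t := Finset.univ)
    (fun x _ => Finset.mem_univ _)]
  apply Finset.sum_congr rfl
  intro u _
  rw [← SimpleGraph.card_neighborFinset_eq_degree, sq, ← Finset.card_product]
  apply Finset.card_bij (fun z _ => z.2)
  · intro z hz
    simp only [T0, Finset.mem_filter, Finset.mem_univ, true_and] at hz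
    rw [Finset.mem_product, SimpleGraph.mem_neighborFinset, SimpleGraph.mem_neighborFinset,
      ← hz.2]
    exact hz.1
  · intro z hz w hw hE
    simp only [T0, Finset.mem_filter] at hz hw
    exact Prod.ext (hz.2.trans hw.2.symm) hE
  · intro w hw
    rw [Finset.mem_product, SimpleGraph.mem_neighborFinset,
      SimpleGraph.mem_neighborFinset] at hw
    exact ⟨(u, w), by simp [T0, hw.1, hw.2], rfl⟩

lemma T0_lower : ((2 * G.edgeFinset.card : ℕ) : ℝ)^2 ≤ (n : ℝ) * (T0 n G).card := by
  rw [T0_card]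
  have hcs := Finset.sum_mul_sq_le_sq_mul_sq (Finset.univ : Finset (Fin n)) (fun _ => (1:ℝ))
    (fun u => (G.degree u : ℝ))
  simp only [one_mul, one_pow] at hcs
  have h1 : (∑ _u : Fin n, (1:ℝ)) = n := by
    rw [Finset.sum_const, nsmul_eq_mul, mul_one, Finset.card_univ, Fintype.card_fin]
  have h2 : ((2 * G.edgeFinset.card : ℕ) : ℝ) = ∑ u : Fin n, (G.degree u : ℝ) := by
    rw [← SimpleGraph.sum_degrees_eq_twice_card_edges]
    push_cast; rfl
  rw [h2]
  calc (∑ u : Fin n, (G.degree u : ℝ))^2 ≤ (∑ _u : Fin n, (1:ℝ)) * ∑ u : Fin n, (G.degree u:ℝ)^2 := hcs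
    _ = (n:ℝ) * ∑ u : Fin n, ((G.degree u : ℝ))^2 := by rw [h1]
    _ = (n:ℝ) * (((∑ u : Fin n, (G.degree u)^2 : ℕ)) : ℝ) := by push_cast; ring

variable {a}

lemma T1_lower (ha : Function.Injective a) :
    (T0 n G).card ≤ (T1 n G a).card + 2 * G.edgeFinset.card := by
  have hsplit := Finset.card_filter_add_card_filter_not
    (s := T0 n G) (p := fun z => a z.2.2 ≠ 0)
  have hbad : ((T0 n G).filter fun z => ¬ a z.2.2 ≠ 0).card ≤ (EF n G).card := by
    apply Finset.card_le_card_of_injOn (fun z => (z.1, z.2.1))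
    · intro z hz
      simp only [Finset.mem_coe, T0, Finset.mem_filter, Finset.mem_univ, true_and] at hz
      simp [EF, hz.1.1]
    · intro z hz w hw hE
      simp only [Finset.mem_coe, T0, Finset.mem_filter, not_not] at hz hw
      simp only [Prod.mk.injEq] at hE
      have h22 : z.2.2 = w.2.2 := ha (hz.2.trans hw.2.symm)
      exact Prod.ext hE.1 (Prod.ext hE.2 h22)
  rw [EF_card] at hbad
  unfold T1
  omega

lemma T1_le_inc (ha : Function.Injective a) :
    (T1 n G a).card ≤ inc (SS n G a ×ˢ PP n G a) (LL n a) := by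
  have hmem : ∀ z ∈ T1 n G a, (a z.2.2, -(a z.2.1 * a z.2.2)) ∈ LL n a := by
    intro z hz
    simp only [T1, Finset.mem_filter] at hz
    simp only [LL, Finset.mem_image]
    exact ⟨(z.2.1, z.2.2), by simp [hz.2], rfl⟩
  rw [Finset.card_eq_sum_card_fiberwise (f := fun z => (a z.2.2, -(a z.2.1 * a z.2.2)))
    (t := LL n a) (fun z hz => hmem z hz)]
  unfold inc
  apply Finset.sum_le_sum
  intro ℓ _
  apply Finset.card_le_card_of_injOn (fun z => (a z.1 + a z.2.1, a z.1 * a z.2.2))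
  · intro z hz
    simp only [Finset.mem_coe, Finset.mem_filter, T1, T0, Finset.mem_univ, true_and] at hz
    obtain ⟨⟨⟨h1, h2⟩, h3⟩, hl⟩ := hz
    simp only [Finset.mem_coe, ptsOn, Finset.mem_filter, Finset.mem_product]
    refine ⟨⟨?_, ?_⟩, ?_⟩
    · simp only [SS, Finset.mem_image]
      exact ⟨(z.1, z.2.1), by simp [EF, h1], rfl⟩
    · simp only [PP, Finset.mem_image]
      exact ⟨(z.1, z.2.2), by simp [EF, h2], rfl⟩
    · rw [← hl]; ring
  · intro z hz w hw hE
    simp only [Finset.mem_coe, Finset.mem_filter, T1, T0] at hz hw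
    obtain ⟨⟨⟨_, _⟩, hz3⟩, hzl⟩ := hz
    obtain ⟨⟨⟨_, _⟩, _⟩, hwl⟩ := hw
    have hl := hzl.trans hwl.symm
    simp only [Prod.mk.injEq] at hl hE
    have h22 : z.2.2 = w.2.2 := ha hl.1
    have h21 : z.2.1 = w.2.1 := by
      apply ha
      have h2 := hl.2
      rw [← h22] at h2
      have h3 : a z.2.1 * a z.2.2 = a w.2.1 * a z.2.2 := by linarith
      exact mul_right_cancel₀ hz3 h3
    have h1 : z.1 = w.1 := by
      apply ha
      have := hE.1
      rw [h21] at this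
      linarith
    exact Prod.ext h1 (Prod.ext h21 h22)

lemma LL_card : (LL n a).card ≤ n * n := by
  calc (LL n a).card ≤ ((Finset.univ : Finset (Fin n × Fin n)).filter fun p => a p.2 ≠ 0).card :=
        Finset.card_image_le
    _ ≤ (Finset.univ : Finset (Fin n × Fin n)).card := Finset.card_filter_le _ _
    _ = n * n := by rw [Finset.card_univ, Fintype.card_prod, Fintype.card_fin]

lemma m_le_SP (ha : Function.Injective a) :
    2 * G.edgeFinset.card ≤ 2 * ((SS n G a).card * (PP n G a).card) := by
  rw [← EF_card]
  have himg : ((EF n G).image fun p => (a p.1 + a p.2, a p.1 * a p.2)).card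
      ≤ (SS n G a).card * (PP n G a).card := by
    rw [← Finset.card_product]
    apply Finset.card_le_card
    intro b hb
    rw [Finset.mem_image] at hb
    obtain ⟨p, hp, rfl⟩ := hb
    rw [Finset.mem_product]
    constructor
    · simp only [SS, Finset.mem_image]; exact ⟨p, hp, rfl⟩
    · simp only [PP, Finset.mem_image]; exact ⟨p, hp, rfl⟩
  have hfib : ∀ b ∈ (EF n G).image fun p => (a p.1 + a p.2, a p.1 * a p.2),
      ((EF n G).filter fun p => (a p.1 + a p.2, a p.1 * a p.2) = b).card ≤ 2 := by
    intro b hb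
    rw [Finset.mem_image] at hb
    obtain ⟨p0, hp0, rfl⟩ := hb
    have hsub : ((EF n G).filter fun p => (a p.1 + a p.2, a p.1 * a p.2)
        = (a p0.1 + a p0.2, a p0.1 * a p0.2)) ⊆ {p0, (p0.2, p0.1)} := by
      intro q hq
      rw [Finset.mem_filter] at hq
      simp only [Prod.mk.injEq] at hq
      obtain ⟨_, hsum, hprod⟩ := hq
      have hQ : (a q.1 - a p0.1) * (a q.1 - a p0.2) = 0 := by linear_combination a q.1 * hsum - hprod
      rw [Finset.mem_insert, Finset.mem_singleton]
      rcases mul_eq_zero.mp hQ with h | h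
      · left
        have h1 : q.1 = p0.1 := ha (by linarith)
        have h2 : q.2 = p0.2 := ha (by rw [h1] at hsum; linarith)
        exact Prod.ext h1 h2
      · right
        have h1 : q.1 = p0.2 := ha (by linarith)
        have h2 : q.2 = p0.1 := ha (by rw [h1] at hsum; linarith)
        exact Prod.ext h1 h2
    calc ((EF n G).filter fun p => (a p.1 + a p.2, a p.1 * a p.2)
        = (a p0.1 + a p0.2, a p0.1 * a p0.2)).card ≤ ({p0, (p0.2, p0.1)} : Finset _).card :=
          Finset.card_le_card hsub
      _ ≤ 2 := Finset.card_insert_le _ _ |>.trans (by simp)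
  calc (EF n G).card ≤ 2 * ((EF n G).image fun p => (a p.1 + a p.2, a p.1 * a p.2)).card :=
        Finset.card_le_mul_card_image _ 2 hfib
    _ ≤ 2 * ((SS n G a).card * (PP n G a).card) := by omega

lemma SS_spec : {x : ℝ | ∃ i j, G.Adj i j ∧ x = a i + a j} = ↑(SS n G a) := by
  ext x
  simp only [Set.mem_setOf_eq, Finset.coe_image, Set.mem_image, Finset.mem_coe, SS, EF,
    Finset.mem_image, Finset.mem_filter, Finset.mem_univ, true_and]
  constructor
  · rintro ⟨i, j, hadj, rfl⟩; exact ⟨(i,j), hadj, rfl⟩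
  · rintro ⟨p, hadj, rfl⟩; exact ⟨p.1, p.2, hadj, rfl⟩

lemma PP_spec : {x : ℝ | ∃ i j, G.Adj i j ∧ x = a i * a j} = ↑(PP n G a) := by
  ext x
  simp only [Set.mem_setOf_eq, Finset.coe_image, Set.mem_image, Finset.mem_coe, PP, EF,
    Finset.mem_image, Finset.mem_filter, Finset.mem_univ, true_and]
  constructor
  · rintro ⟨i, j, hadj, rfl⟩; exact ⟨(i,j), hadj, rfl⟩
  · rintro ⟨p, hadj, rfl⟩; exact ⟨p.1, p.2, hadj, rfl⟩

lemma deg_le (u : Fin n) : G.degree u ≤ n := by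
  calc G.degree u ≤ Fintype.card (Fin n) - 1 := by
        have := SimpleGraph.degree_lt_card_verts (G := G) u
        omega
    _ ≤ n := by rw [Fintype.card_fin]; omega

lemma edge_card_le : 2 * G.edgeFinset.card ≤ n * n := by
  rw [← SimpleGraph.sum_degrees_eq_twice_card_edges]
  calc ∑ u : Fin n, G.degree u ≤ ∑ _u : Fin n, n :=
        Finset.sum_le_sum (fun u _ => deg_le n G u)
    _ = n * n := by rw [Finset.sum_const, smul_eq_mul, Finset.card_univ, Fintype.card_fin]

end setup


lemma nat_div_succ_mul (a b : ℕ) (hb : 0 < b) : a ≤ (a / b + 1) * b := by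
  have h1 := Nat.div_add_mod a b
  have h2 := Nat.mod_lt a hb
  have h3 : b * (a / b) = (a / b) * b := Nat.mul_comm _ _
  have h4 : (a / b + 1) * b = (a / b) * b + b := by ring
  omega

set_option maxHeartbeats 3000000 in
/-- Elekes-type lower bound: `|A +_G A| + |A ·_G A| ≥ c · m^{3/2} / n^{7/4}`
for an absolute constant `c > 0`. -/
theorem stmt_10 :
    ∃ c : ℝ, 0 < c ∧
      ∀ (n : ℕ) (a : Fin n → ℝ), Function.Injective a →
        ∀ (G : SimpleGraph (Fin n)) (_ : DecidableRel G.Adj) (m : ℕ),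
          m = G.edgeFinset.card →
          c * (m : ℝ) ^ ((3 : ℝ) / 2) / (n : ℝ) ^ ((7 : ℝ) / 4) ≤
            ({x : ℝ | ∃ i j, G.Adj i j ∧ x = a i + a j}.ncard : ℝ) +
            ({x : ℝ | ∃ i j, G.Adj i j ∧ x = a i * a j}.ncard : ℝ) := by
  refine ⟨1/4, by norm_num, ?_⟩
  intro n a ha G hdec m hm
  rw [SS_spec n G, PP_spec n G, Set.ncard_coe_finset, Set.ncard_coe_finset]
  set X : ℝ := ((SS n G a).card : ℝ) with hXdef
  set Z : ℝ := ((PP n G a).card : ℝ) with hZdef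
  have hX0 : 0 ≤ X := by positivity
  have hZ0 : 0 ≤ Z := by positivity
  -- trivial case m = 0
  rcases Nat.eq_zero_or_pos m with hm0 | hm1
  · rw [hm0]
    push_cast
    rw [Real.zero_rpow (by norm_num)]
    have : (1:ℝ)/4 * 0 / (n : ℝ) ^ ((7:ℝ)/4) = 0 := by ring
    rw [this]
    positivity
  -- now m ≥ 1, hence n ≥ 1
  have hmn : 2 * m ≤ n * n := by rw [hm]; exact edge_card_le n G
  have hn1 : 1 ≤ n := by
    rcases Nat.eq_zero_or_pos n with h | h
    · rw [h] at hmn; omega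
    · exact h
  have hm0R : (0:ℝ) ≤ (m:ℝ) := by positivity
  have hn0R : (0:ℝ) ≤ (n:ℝ) := by positivity
  -- u = n^{1/4}, M = √m
  set u : ℝ := (n:ℝ) ^ ((1:ℝ)/4) with hudef
  set M : ℝ := Real.sqrt m with hMdef
  have hu0 : 0 ≤ u := Real.rpow_nonneg hn0R _
  have hM0 : 0 ≤ M := Real.sqrt_nonneg _
  have hu4 : u ^ 4 = (n:ℝ) := by
    rw [hudef, ← Real.rpow_natCast ((n:ℝ) ^ ((1:ℝ)/4)) 4, ← Real.rpow_mul hn0R]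
    norm_num
  have hM2 : M ^ 2 = (m:ℝ) := Real.sq_sqrt hm0R
  have hn74 : (n:ℝ) ^ ((7:ℝ)/4) = u ^ 7 := by
    rw [hudef, ← Real.rpow_natCast ((n:ℝ) ^ ((1:ℝ)/4)) 7, ← Real.rpow_mul hn0R]
    norm_num
  have hm32 : (m:ℝ) ^ ((3:ℝ)/2) = M ^ 3 := by
    rw [← hM2, ← Real.rpow_natCast M 2, ← Real.rpow_mul hM0, ← Real.rpow_natCast M 3]
    norm_num
  rw [hn74, hm32]
  have hu1 : 1 ≤ u := by
    by_contra h
    push_neg at h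
    have : u ^ 4 < 1 := pow_lt_one₀ hu0 h (by norm_num)
    rw [hu4] at this
    exact absurd this (by push_cast; exact_mod_cast Nat.not_lt.mpr hn1)
  have hM1 : 1 ≤ M := by
    by_contra h
    push_neg at h
    have : M ^ 2 < 1 := pow_lt_one₀ hM0 h (by norm_num)
    rw [hM2] at this
    exact absurd this (by exact_mod_cast Nat.not_lt.mpr hm1)
  have hu7pos : (0:ℝ) < u ^ 7 := by positivity
  have hMpos : (0:ℝ) < M := lt_of_lt_of_le zero_lt_one hM1
  have hupos : (0:ℝ) < u := lt_of_lt_of_le zero_lt_one hu1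
  have hu8 : 2 * M ^ 2 ≤ u ^ 8 := by
    have : ((2 * m : ℕ) : ℝ) ≤ ((n * n : ℕ) : ℝ) := by exact_mod_cast hmn
    push_cast at this
    have h8 : u ^ 8 = u ^ 4 * u ^ 4 := by ring
    rw [h8, hu4, hM2]
    linarith
  -- AM-GM consequence of m ≤ σπ
  have hm_le : (m:ℝ) ≤ X * Z := by
    have h := m_le_SP n G ha
    have h2 : G.edgeFinset.card ≤ (SS n G a).card * (PP n G a).card := by omega
    rw [hm, hXdef, hZdef]
    exact_mod_cast h2
  have hMX : 2 * M ≤ X + Z := by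
    have h1 : M ^ 2 ≤ ((X + Z)/2) ^ 2 := by
      have h2 : X * Z ≤ ((X + Z)/2) ^ 2 := by linarith only [sq_nonneg (X - Z)]
      rw [hM2]
      linarith only [hm_le, h2]
    have h3 : M ≤ (X + Z)/2 := by
      have h4 := Real.sqrt_le_sqrt h1
      rwa [Real.sqrt_sq hM0, Real.sqrt_sq (by linarith only [hX0, hZ0])] at h4
    linarith only [h3]
  -- Case A : m ≤ 8 u^7
  rcases le_or_gt (m:ℝ) (8 * u ^ 7) with hA | hA
  · rw [div_le_iff₀ hu7pos]
    have k1 : (m:ℝ) * M ≤ 8 * u ^ 7 * M := mul_le_mul_of_nonneg_right hA hM0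
    have k2 : 2 * M * u ^ 7 ≤ (X + Z) * u ^ 7 :=
      mul_le_mul_of_nonneg_right hMX (le_of_lt hu7pos)
    have k3 : M ^ 3 = (m:ℝ) * M := by rw [← hM2]; ring
    rw [k3]
    linarith
  -- Case B : X + Z ≥ M²/u²
  rcases le_or_gt (M ^ 2 / u ^ 2) (X + Z) with hB | hB
  · refine le_trans ?_ hB
    rw [div_le_div_iff₀ hu7pos (by positivity)]
    -- (1/4) M³ u² ≤ M² u⁷  ⇐  M ≤ u⁴ and u⁶ ≤ u⁷
    have hMsq : M ^ 2 ≤ (u ^ 4) ^ 2 := by linarith only [hu8, sq_nonneg M]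
    have hMu4 : M ≤ u ^ 4 := by
      have h1 : M = Real.sqrt (M ^ 2) := (Real.sqrt_sq hM0).symm
      rw [h1]
      calc Real.sqrt (M ^ 2) ≤ Real.sqrt ((u ^ 4) ^ 2) := Real.sqrt_le_sqrt hMsq
        _ = u ^ 4 := Real.sqrt_sq (by positivity)
    have b1 : M * (M ^ 2 * u ^ 2) ≤ u ^ 4 * (M ^ 2 * u ^ 2) :=
      mul_le_mul_of_nonneg_right hMu4 (by positivity)
    have b2 : M ^ 2 * u ^ 6 ≤ M ^ 2 * u ^ 7 :=
      mul_le_mul_of_nonneg_left (pow_le_pow_right₀ hu1 (by norm_num)) (by positivity)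
    have b0 : (0:ℝ) ≤ M ^ 3 * u ^ 2 := by positivity
    linarith only [b1, b2, b0]
  -- Case C : main case
  have hXZle : X + Z ≤ M ^ 2 / u ^ 2 := le_of_lt hB
  have hmA : 8 * u ^ 7 < M ^ 2 := by rw [hM2]; exact hA
  have hu2M : 2 * u ^ 4 ≤ M ^ 2 := by
    have h47 : u ^ 4 ≤ u ^ 7 := pow_le_pow_right₀ hu1 (by norm_num)
    linarith [hmA, h47, pow_nonneg hu0 7]
  -- the parameter R and r
  set R : ℝ := M ^ 4 / (16 * u ^ 12) with hRdef
  have hRpos : 0 < R := by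
    rw [hRdef]
    have : (0:ℝ) < M := lt_of_lt_of_le zero_lt_one hM1
    positivity
  have hM4 : 64 * u ^ 14 ≤ M ^ 4 := by
    have h := mul_self_le_mul_self (by positivity : (0:ℝ) ≤ 8 * u ^ 7) (le_of_lt hmA)
    linarith only [h]
  have hR1 : 1 ≤ R := by
    rw [hRdef, le_div_iff₀ (by positivity)]
    have h1214 : u ^ 12 ≤ u ^ 14 := pow_le_pow_right₀ hu1 (by norm_num)
    linarith only [hM4, h1214, pow_nonneg hu0 14]
  set r : ℕ := ⌈R⌉₊ with hrdef
  have hrR : R ≤ (r:ℝ) := Nat.le_ceil R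
  have hr2R : (r:ℝ) ≤ 2 * R := by
    have := Nat.ceil_lt_add_one (le_of_lt hRpos)
    have h2 : R + 1 ≤ 2 * R := by linarith
    rw [hrdef]
    linarith
  have hr0 : 0 < r := Nat.ceil_pos.mpr hRpos
  have hr0R : (0:ℝ) < (r:ℝ) := by exact_mod_cast hr0
  -- block sizes
  set s : ℕ := (SS n G a).card / r + 1 with hsdef
  set t : ℕ := (PP n G a).card / r + 1 with htdef
  have hs0 : 0 < s := by rw [hsdef]; exact Nat.succ_pos _
  have ht0 : 0 < t := by rw [htdef]; exact Nat.succ_pos _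
  have hXcard : (SS n G a).card ≤ s * r := nat_div_succ_mul _ _ hr0
  have hZcard : (PP n G a).card ≤ t * r := nat_div_succ_mul _ _ hr0
  -- incidence upper bound
  set K : ℝ := ((LL n a).card : ℝ) with hKdef
  have hK0 : 0 ≤ K := by positivity
  have hK : K ≤ u ^ 8 := by
    have := LL_card n (a := a)
    have h2 : K ≤ (n:ℝ) * n := by rw [hKdef]; exact_mod_cast this
    have h8 : u ^ 8 = u ^ 4 * u ^ 4 := by ring
    rw [h8, hu4]
    linarith
  set I : ℝ := (inc (SS n G a ×ˢ PP n G a) (LL n a) : ℝ) with hIdef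
  have hI0 : 0 ≤ I := by positivity
  have hIB := incidence_bound (SS n G a) (PP n G a) (LL n a) r s t hr0 hs0 ht0 hXcard hZcard
  rw [← hIdef, ← hKdef] at hIB
  -- incidence lower bound : 4 M⁴ ≤ u⁴ I + 2 M² u⁴
  have hI_low : 4 * M ^ 4 ≤ u ^ 4 * I + 2 * M ^ 2 * u ^ 4 := by
    have h1 := T0_lower n G
    have h2 := T1_lower n G ha
    have h3 := T1_le_inc n G ha
    have h4 : ((T0 n G).card : ℝ) ≤ I + 2 * G.edgeFinset.card := by
      rw [hIdef]
      have : (T0 n G).card ≤ inc (SS n G a ×ˢ PP n G a) (LL n a) + 2 * G.edgeFinset.card := by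
        omega
      exact_mod_cast this
    have h5 : ((2 * G.edgeFinset.card : ℕ) : ℝ) = 2 * (m:ℝ) := by rw [hm]; push_cast; ring
    have h6 : 4 * (m:ℝ)^2 ≤ (n:ℝ) * (I + 2 * m) := by
      calc 4 * (m:ℝ)^2 = ((2 * G.edgeFinset.card : ℕ) : ℝ)^2 := by rw [h5]; ring
        _ ≤ (n:ℝ) * (T0 n G).card := h1
        _ ≤ (n:ℝ) * (I + 2 * G.edgeFinset.card) := by
            apply mul_le_mul_of_nonneg_left h4 hn0R
        _ = (n:ℝ) * (I + 2 * m) := by rw [hm]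
    rw [← hu4, ← hM2] at h6
    linarith only [h6]
  have hI_low3 : 3 * M ^ 4 ≤ u ^ 4 * I := by
    have : 2 * M ^ 2 * u ^ 4 ≤ M ^ 4 := by
      have h := mul_le_mul_of_nonneg_left hu2M (sq_nonneg M)
      linarith only [h]
    linarith
  -- bound the sqrt term
  set q : ℝ := Real.sqrt (2 * r * K) with hqdef
  have hq0 : 0 ≤ q := Real.sqrt_nonneg _
  have hsR : Real.sqrt R = M ^ 2 / (4 * u ^ 6) := by
    have hEq : R = (M ^ 2 / (4 * u ^ 6)) ^ 2 := by
      rw [hRdef]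
      field_simp
      ring
    rw [hEq, Real.sqrt_sq (by positivity)]
  have hq : q ≤ 2 * Real.sqrt R * u ^ 4 := by
    have harg : 2 * r * K ≤ (2 * Real.sqrt R * u ^ 4) ^ 2 := by
      have hsq : (2 * Real.sqrt R * u ^ 4) ^ 2 = 4 * R * u ^ 8 := by
        rw [mul_pow, mul_pow, Real.sq_sqrt (le_of_lt hRpos)]
        ring
      rw [hsq]
      linarith only [mul_nonneg (sub_nonneg.mpr hr2R) hK0,
        mul_nonneg (le_of_lt hRpos) (sub_nonneg.mpr hK)]
    have := Real.sqrt_le_sqrt harg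
    rw [hqdef] at *
    rw [Real.sqrt_sq (by positivity)] at this
    exact this
  -- bound s·R and t·R
  have hscast : (s:ℝ) * (r:ℝ) ≤ X + (r:ℝ) := by
    have h1 : ((s:ℕ):ℝ) ≤ X / (r:ℝ) + 1 := by
      rw [hsdef]
      push_cast
      have := Nat.cast_div_le (α := ℝ) (m := (SS n G a).card) (n := r)
      rw [hXdef]
      linarith
    have h2 := mul_le_mul_of_nonneg_right h1 (le_of_lt hr0R)
    calc (s:ℝ) * (r:ℝ) ≤ (X / (r:ℝ) + 1) * (r:ℝ) := h2
      _ = X + (r:ℝ) := by field_simp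
  have htcast : (t:ℝ) * (r:ℝ) ≤ Z + (r:ℝ) := by
    have h1 : ((t:ℕ):ℝ) ≤ Z / (r:ℝ) + 1 := by
      rw [htdef]
      push_cast
      have := Nat.cast_div_le (α := ℝ) (m := (PP n G a).card) (n := r)
      rw [hZdef]
      linarith
    have h2 := mul_le_mul_of_nonneg_right h1 (le_of_lt hr0R)
    calc (t:ℝ) * (r:ℝ) ≤ (Z / (r:ℝ) + 1) * (r:ℝ) := h2
      _ = Z + (r:ℝ) := by field_simp
  have hsR2 : (s:ℝ) * R ≤ X + 2 * R := by
    have h1 : (s:ℝ) * R ≤ (s:ℝ) * (r:ℝ) :=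
      mul_le_mul_of_nonneg_left hrR (Nat.cast_nonneg s)
    linarith only [h1, hscast, hr2R]
  have htR2 : (t:ℝ) * R ≤ Z + 2 * R := by
    have h1 : (t:ℝ) * R ≤ (t:ℝ) * (r:ℝ) :=
      mul_le_mul_of_nonneg_left hrR (Nat.cast_nonneg t)
    linarith only [h1, htcast, hr2R]
  -- key product bound
  have hR0 : (0:ℝ) ≤ R := le_of_lt hRpos
  have hsqR0 : (0:ℝ) ≤ Real.sqrt R := Real.sqrt_nonneg _
  have hu40 : (0:ℝ) ≤ u ^ 4 := by positivity
  have hX2R : (0:ℝ) ≤ X + 2*R := by linarith only [hX0, hRpos]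
  have hZ2R : (0:ℝ) ≤ Z + 2*R := by linarith only [hZ0, hRpos]
  have hkey : (s:ℝ) * t * r * q * R ^ 2 ≤ (X + 2*R) * (Z + 2*R) * (2*R) * (2 * Real.sqrt R * u ^ 4) := by
    have hrq : (r:ℝ) * q ≤ (2*R) * (2 * Real.sqrt R * u ^ 4) :=
      mul_le_mul hr2R hq hq0 (by linarith only [hRpos])
    have e1 : (s:ℝ) * t * r * q * R ^ 2 = ((s:ℝ)*R) * ((t:ℝ)*R) * ((r:ℝ)*q) := by ring
    rw [e1]
    have hst : ((s:ℝ)*R) * ((t:ℝ)*R) ≤ (X + 2*R) * (Z + 2*R) :=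
      mul_le_mul hsR2 htR2 (mul_nonneg (Nat.cast_nonneg t) hR0) hX2R
    calc ((s:ℝ)*R) * ((t:ℝ)*R) * ((r:ℝ)*q)
        ≤ ((X + 2*R) * (Z + 2*R)) * ((r:ℝ)*q) :=
          mul_le_mul_of_nonneg_right hst (mul_nonneg (le_of_lt hr0R) hq0)
      _ ≤ ((X + 2*R) * (Z + 2*R)) * ((2*R) * (2 * Real.sqrt R * u ^ 4)) :=
          mul_le_mul_of_nonneg_left hrq (mul_nonneg hX2R hZ2R)
      _ = (X + 2*R) * (Z + 2*R) * (2*R) * (2 * Real.sqrt R * u ^ 4) := by ring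
  -- divide by R²
  have hstrq : (s:ℝ) * t * r * q ≤ (X + 2*R) * (Z + 2*R) * (16 * u ^ 10 / M ^ 2) := by
    have hR2 : (0:ℝ) < R ^ 2 := pow_pos hRpos 2
    have hMne : M ≠ 0 := ne_of_gt hMpos
    have hune : u ≠ 0 := ne_of_gt hupos
    have e3 : (X + 2*R) * (Z + 2*R) * (16 * u ^ 10 / M ^ 2)
        = (X + 2*R) * (Z + 2*R) * (2*R) * (2 * Real.sqrt R * u ^ 4) / R ^ 2 := by
      rw [hsR, hRdef]
      field_simp
      ring
    rw [e3, le_div_iff₀ hR2]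
    exact hkey
  -- combine into the incidence upper bound
  have hI_up : I ≤ 4 * R * u ^ 8 + (X + 2*R) * (Z + 2*R) * (16 * u ^ 10 / M ^ 2) := by
    have h1 : 2 * (r:ℝ) * K ≤ 4 * R * u ^ 8 := by
      linarith only [mul_nonneg (sub_nonneg.mpr hr2R) hK0,
        mul_nonneg (le_of_lt hRpos) (sub_nonneg.mpr hK)]
    push_cast at hIB
    have hs' : (s:ℝ) = (((SS n G a).card / r : ℕ) : ℝ) + 1 := by rw [hsdef]; push_cast; ring
    have ht' : (t:ℝ) = (((PP n G a).card / r : ℕ) : ℝ) + 1 := by rw [htdef]; push_cast; ring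
    calc I ≤ 2*(r:ℝ)*K + (s:ℝ)*t*r*q := by
          rw [hs', ht'] at hIB ⊢; linarith only [hIB]
      _ ≤ 4 * R * u ^ 8 + (X + 2*R) * (Z + 2*R) * (16 * u ^ 10 / M ^ 2) := by
          linarith only [h1, hstrq]
  -- extract the product bound : 16 u¹⁴ X Z ≥ (5/8) M⁶
  have hfin : (5/8) * M ^ 6 ≤ 16 * u ^ 14 * (X * Z) := by
    -- multiply hI_up by u⁴ M²
    have hmul : u ^ 4 * I * M ^ 2 ≤ u ^ 4 * (4 * R * u ^ 8 + (X + 2*R) * (Z + 2*R) * (16 * u ^ 10 / M ^ 2)) * M ^ 2 := by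
      have := mul_le_mul_of_nonneg_left hI_up (by positivity : (0:ℝ) ≤ u ^ 4)
      exact mul_le_mul_of_nonneg_right this (by positivity)
    have hE : u ^ 4 * (4 * R * u ^ 8 + (X + 2*R) * (Z + 2*R) * (16 * u ^ 10 / M ^ 2)) * M ^ 2
        = M ^ 6 / 4 + 16 * u ^ 14 * (X*Z) + 32 * u ^ 14 * R * (X + Z) + 64 * u ^ 14 * R ^ 2 := by
      rw [hRdef]
      field_simp
      ring
    have hE3 : 32 * u ^ 14 * R * (X + Z) ≤ 2 * M ^ 6 := by
      have h1 : 32 * u ^ 14 * R * (X + Z) ≤ 32 * u ^ 14 * R * (M ^ 2 / u ^ 2) := by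
        apply mul_le_mul_of_nonneg_left hXZle (by positivity)
      have h2 : 32 * u ^ 14 * R * (M ^ 2 / u ^ 2) = 2 * M ^ 6 := by
        rw [hRdef]; field_simp; ring
      linarith
    have hE4 : 64 * u ^ 14 * R ^ 2 ≤ M ^ 6 / 8 := by
      have h1 : 64 * u ^ 14 * R ^ 2 = M ^ 8 / (4 * u ^ 10) := by
        rw [hRdef]; field_simp; ring
      rw [h1, div_le_div_iff₀ (by positivity) (by norm_num : (0:ℝ) < 8)]
      -- M⁸ · 8 ≤ M⁶/... : 8 M⁸ ≤ M⁶ 4 u¹⁰  ⇐ 2 M² ≤ u¹⁰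
      have h810 : u ^ 8 ≤ u ^ 10 := pow_le_pow_right₀ hu1 (by norm_num)
      have k1 : M ^ 6 * (2 * M ^ 2) ≤ M ^ 6 * u ^ 8 :=
        mul_le_mul_of_nonneg_left hu8 (pow_nonneg hM0 6)
      have k2 : M ^ 6 * u ^ 8 ≤ M ^ 6 * u ^ 10 :=
        mul_le_mul_of_nonneg_left h810 (pow_nonneg hM0 6)
      linarith only [k1, k2]
    have hlhs : 3 * M ^ 6 ≤ u ^ 4 * I * M ^ 2 := by
      have := mul_le_mul_of_nonneg_right hI_low3 (by positivity : (0:ℝ) ≤ M ^ 2)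
      calc 3 * M ^ 6 = 3 * M ^ 4 * M ^ 2 := by ring
        _ ≤ u ^ 4 * I * M ^ 2 := this
    rw [hE] at hmul
    linarith only [hmul, hE3, hE4, hlhs]
  -- conclude
  have hL0 : (0:ℝ) ≤ 1/4 * M ^ 3 / u ^ 7 := by positivity
  have hsq : (1/4 * M ^ 3 / u ^ 7) ^ 2 ≤ (X + Z) ^ 2 := by
    have hLsq : (1/4 * M ^ 3 / u ^ 7) ^ 2 * (16 * u ^ 14) = M ^ 6 := by
      field_simp
      ring
    have h4XZ : 4 * (X * Z) ≤ (X + Z) ^ 2 := by linarith only [sq_nonneg (X - Z)]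
    -- (LHS)² ≤ (8/5)·XZt... : (LHS)²·16u¹⁴ = M⁶ ≤ (8/5)·16u¹⁴·XZ
    have hu14 : (0:ℝ) < 16 * u ^ 14 := by positivity
    have h1 : (1/4 * M ^ 3 / u ^ 7) ^ 2 ≤ (8/5) * (X * Z) := by
      rw [← mul_le_mul_iff_of_pos_right hu14, hLsq]
      calc M ^ 6 ≤ (8/5) * (16 * u ^ 14 * (X * Z)) := by linarith [hfin]
        _ = 8/5 * (X*Z) * (16 * u ^ 14) := by ring
    have hXZ0 : 0 ≤ X * Z := mul_nonneg hX0 hZ0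
    linarith only [h1, h4XZ, hXZ0]
  calc 1/4 * M ^ 3 / u ^ 7 = Real.sqrt ((1/4 * M ^ 3 / u ^ 7) ^ 2) :=
        (Real.sqrt_sq hL0).symm
    _ ≤ Real.sqrt ((X + Z) ^ 2) := Real.sqrt_le_sqrt hsq
    _ = X + Z := Real.sqrt_sq (add_nonneg hX0 hZ0)

end
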